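/- Let 2 ≤ m ≤ n be integers, let ℋ be the m × n half-rectangular grid, i.e., the set of integer points (x, y) ∈ ℤ² with 0 ≤ x ≤ n − 1, 0 ≤ y ≤ m − 1, and (m−1)·x + (n−1)·y ≤ (m−1)·(n−1), and let P = (x₀, y₀) be a point of ℋ. Then any finite set of lines in ℝ², none of which passes through P, whose union contains every point of ℋ ∖ {P}, has size at least n − ⌈((n−m)/(m−1))·y₀⌉ − 1. -/
import Mathlib


open scoped Classical

/-- `IsLine s` means that `s ⊆ ℝ²` is a line, i.e. of the form
`{(x, y) | u * x + v * y = c}` with `(u, v) ≠ (0, 0)`. -/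
def IsLine (s : Set (ℝ × ℝ)) : Prop :=
  ∃ u v c : ℝ, (u, v) ≠ ((0 : ℝ), (0 : ℝ)) ∧ s = {p : ℝ × ℝ | u * p.1 + v * p.2 = c}

lemma line_of_two_pts {s : Set (ℝ × ℝ)} (hs : IsLine s) {x x' : ℝ}
    (h1 : (x, (0:ℝ)) ∈ s) (h2 : (x', (0:ℝ)) ∈ s) (hne : x ≠ x') :
    s = {p : ℝ × ℝ | p.2 = 0} := by
  obtain ⟨u, v, c, huv, rfl⟩ := hs
  simp only [Set.mem_setOf_eq] at h1 h2
  have hu : u = 0 := by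
    by_contra hu0
    exact hne (mul_left_cancel₀ hu0 (by linarith))
  have hc : c = 0 := by rw [hu] at h1; linarith
  have hv : v ≠ 0 := by
    intro hv0
    exact huv (by simp [hu, hv0, Prod.ext_iff])
  ext p
  simp [hu, hc, mul_eq_zero, hv]

lemma card_row (L : Finset (Set (ℝ × ℝ))) (hline : ∀ s ∈ L, IsLine s)
    (S : Finset ℕ)
    (hcov : ∀ x ∈ S, ∃ s ∈ L, ((x : ℝ), (0:ℝ)) ∈ s)
    (hhor : ({p : ℝ × ℝ | p.2 = 0} : Set (ℝ × ℝ)) ∉ L) :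
    S.card ≤ L.card := by
  have hch : ∀ x : ℕ, ∃ s, x ∈ S → s ∈ L ∧ ((x : ℝ), (0:ℝ)) ∈ s := by
    intro x
    by_cases hx : x ∈ S
    · obtain ⟨s, hs, hm⟩ := hcov x hx
      exact ⟨s, fun _ => ⟨hs, hm⟩⟩
    · exact ⟨∅, fun h => absurd h hx⟩
  choose f hf using hch
  apply Finset.card_le_card_of_injOn f (fun x hx => (hf x hx).1)
  intro x hx x' hx' heq
  by_contra hne
  have h1 := (hf x hx).2
  have h2 := (hf x' hx').2
  rw [heq] at h1
  have hfl : f x' = {p : ℝ × ℝ | p.2 = 0} :=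
    line_of_two_pts (hline _ (hf x' hx').1) h1 h2 (by exact_mod_cast hne)
  exact hhor (hfl ▸ (hf x' hx').1)

lemma key (a b : ℕ) (ha : 1 ≤ a) (hab : a ≤ b) :
    ∀ (y₀ B x₀ : ℕ) (L : Finset (Set (ℝ × ℝ))),
      a * x₀ + b * y₀ ≤ B →
      (∀ s ∈ L, IsLine s) →
      (∀ s ∈ L, ((x₀ : ℝ), (y₀ : ℝ)) ∉ s) →
      (∀ x y : ℕ, a * x + b * y ≤ B → (x, y) ≠ (x₀, y₀) →
        ∃ s ∈ L, ((x : ℝ), (y : ℝ)) ∈ s) →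
      (B - b * y₀) / a + y₀ ≤ L.card := by
  intro y₀
  induction y₀ with
  | zero =>
    intro B x₀ L hP hline hmiss hcover
    simp only [mul_zero, Nat.sub_zero, add_zero]
    have hax : a * x₀ ≤ B := by omega
    have hx₀ : x₀ ∈ Finset.range (B / a + 1) := by
      rw [Finset.mem_range]
      have hcomm : x₀ * a = a * x₀ := Nat.mul_comm x₀ a
      have : x₀ ≤ B / a := (Nat.le_div_iff_mul_le (by omega)).mpr (by omega)
      omega
    have hcard : ((Finset.range (B / a + 1)).erase x₀).card = B / a := by
      rw [Finset.card_erase_of_mem hx₀, Finset.card_range, Nat.add_sub_cancel]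
    rw [← hcard]
    apply card_row L hline
    · intro x hx
      rw [Finset.mem_erase, Finset.mem_range] at hx
      have haxB : a * x ≤ B := by
        have h1 := (Nat.le_div_iff_mul_le (show 0 < a by omega)).mp (by omega : x ≤ B / a)
        have hcomm : x * a = a * x := Nat.mul_comm x a
        omega
      have := hcover x 0 (by omega) (by simp [Prod.ext_iff]; omega)
      simpa using this
    · intro hmem
      exact hmiss _ hmem (by simp)
  | succ y₀ ih =>
    intro B x₀ L hP hline hmiss hcover
    have hmulsucc : b * (y₀ + 1) = b * y₀ + b := Nat.mul_succ b y₀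
    have hbB : b * (y₀ + 1) ≤ B := by omega
    by_cases hl : ({p : ℝ × ℝ | p.2 = 0} : Set (ℝ × ℝ)) ∈ L
    · -- the horizontal axis is one of the lines; peel off the bottom row
      set T : Set (ℝ × ℝ) → Set (ℝ × ℝ) :=
        fun s => (fun p : ℝ × ℝ => (p.1, p.2 + 1)) ⁻¹' s with hT
      have hTinj : Function.Injective T := by
        apply Set.preimage_injective.mpr
        intro q
        exact ⟨(q.1, q.2 - 1), by simp⟩
      set L' := (L.erase {p : ℝ × ℝ | p.2 = 0}).image T with hL'
      have hcard : L'.card = L.card - 1 := by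
        rw [hL', Finset.card_image_of_injective _ hTinj,
          Finset.card_erase_of_mem hl]
      have h1 := ih (B - b) x₀ L' (by omega)
        (by
          intro s hs
          rw [hL', Finset.mem_image] at hs
          obtain ⟨t, ht, rfl⟩ := hs
          obtain ⟨u, v, c, huv, rfl⟩ := hline t (Finset.mem_of_mem_erase ht)
          refine ⟨u, v, c - v, huv, ?_⟩
          ext p
          simp only [hT, Set.mem_preimage, Set.mem_setOf_eq]
          constructor <;> intro h <;> linarith)
        (by
          intro s hs
          rw [hL', Finset.mem_image] at hs
          obtain ⟨t, ht, rfl⟩ := hs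
          intro hmem
          have hmem' : ((x₀ : ℝ), ((y₀ + 1 : ℕ) : ℝ)) ∈ t := by
            push_cast
            simpa [hT] using hmem
          exact hmiss t (Finset.mem_of_mem_erase ht) hmem')
        (by
          intro x y hxy hne
          have hb : b ≤ B := by omega
          have hxy2 : a * x + b * (y + 1) ≤ B := by
            have hms : b * (y + 1) = b * y + b := by ring
            omega
          obtain ⟨s, hs, hmem⟩ := hcover x (y + 1) hxy2
            (by simp only [ne_eq, Prod.mk.injEq, not_and] at hne ⊢; omega)
          have hsne : s ≠ ({p : ℝ × ℝ | p.2 = 0} : Set (ℝ × ℝ)) := by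
            rintro rfl
            simp only [Set.mem_setOf_eq] at hmem
            have : ((y : ℝ) + 1) = 0 := by push_cast at hmem; exact hmem
            have : (0:ℝ) ≤ (y : ℝ) := Nat.cast_nonneg y
            linarith
          refine ⟨T s, ?_, ?_⟩
          · rw [hL', Finset.mem_image]
            exact ⟨s, Finset.mem_erase.mpr ⟨hsne, hs⟩, rfl⟩
          · simp only [hT, Set.mem_preimage]
            push_cast at hmem
            exact hmem)
      have hsub : B - b - b * y₀ = B - b * (y₀ + 1) := by omega
      rw [hsub, hcard] at h1
      have hLpos : 1 ≤ L.card := Finset.card_pos.mpr ⟨_, hl⟩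
      omega
    · -- the horizontal axis is not among the lines: row 0 needs B/a + 1 lines
      have hcard : B / a + 1 ≤ L.card := by
        rw [← Finset.card_range (B / a + 1)]
        apply card_row L hline _ _ hl
        intro x hx
        rw [Finset.mem_range] at hx
        have haxB : a * x ≤ B := by
          have h1 := (Nat.le_div_iff_mul_le (show 0 < a by omega)).mp
            (by omega : x ≤ B / a)
          have hcomm : x * a = a * x := Nat.mul_comm x a
          omega
        have := hcover x 0 (by omega) (by simp [Prod.ext_iff])
        simpa using this
      have hmul : a * y₀ ≤ b * y₀ := Nat.mul_le_mul_right y₀ hab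
      have h1 : (B - b * (y₀ + 1)) / a + y₀ = (B - b * (y₀ + 1) + a * y₀) / a := by
        rw [Nat.add_mul_div_left _ _ (show 0 < a by omega)]
      have h2 : B - b * (y₀ + 1) + a * y₀ ≤ B := by omega
      have h3 : (B - b * (y₀ + 1) + a * y₀) / a ≤ B / a := Nat.div_le_div_right h2
      omega

theorem stmt_6 (m n : ℕ) (hm : 2 ≤ m) (hmn : m ≤ n)
    -- P = (x₀, y₀) is a point of the m × n half-rectangular grid
    (x₀ y₀ : ℕ) (hx₀ : x₀ ≤ n - 1) (hy₀ : y₀ ≤ m - 1)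
    (hP : (m - 1) * x₀ + (n - 1) * y₀ ≤ (m - 1) * (n - 1))
    -- L is a finite set of lines in ℝ²
    (L : Finset (Set (ℝ × ℝ)))
    (hline : ∀ s ∈ L, IsLine s)
    -- no line of L passes through P
    (hmiss : ∀ s ∈ L, ((x₀ : ℝ), (y₀ : ℝ)) ∉ s)
    -- every point of ℋ ∖ {P} lies on some line of L
    (hcover : ∀ x y : ℕ, x ≤ n - 1 → y ≤ m - 1 →
      (m - 1) * x + (n - 1) * y ≤ (m - 1) * (n - 1) → (x, y) ≠ (x₀, y₀) →
      ∃ s ∈ L, ((x : ℝ), (y : ℝ)) ∈ s) :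
    (n : ℤ) - ⌈(((n : ℝ) - (m : ℝ)) / ((m : ℝ) - 1)) * (y₀ : ℝ)⌉ - 1 ≤ (L.card : ℤ) := by
  obtain ⟨a, rfl⟩ : ∃ a, m = a + 1 := ⟨m - 1, by omega⟩
  obtain ⟨b, rfl⟩ : ∃ b, n = b + 1 := ⟨n - 1, by omega⟩
  have ha : 1 ≤ a := by omega
  have hab : a ≤ b := by omega
  simp only [Nat.add_sub_cancel] at hx₀ hy₀ hP hcover
  have hcov' : ∀ x y : ℕ, a * x + b * y ≤ a * b → (x, y) ≠ (x₀, y₀) →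
      ∃ s ∈ L, ((x : ℝ), (y : ℝ)) ∈ s := by
    intro x y hxy hne
    have hx : x ≤ b := by
      have h1 : a * x ≤ a * b := by omega
      exact Nat.le_of_mul_le_mul_left h1 (by omega)
    have hy : y ≤ a := by
      have h1 : b * y ≤ b * a := by
        have : a * b = b * a := Nat.mul_comm a b
        omega
      exact Nat.le_of_mul_le_mul_left h1 (by omega)
    exact hcover x y hx hy hxy hne
  have hkey := key a b ha hab y₀ (a * b) x₀ L hP hline hmiss hcov'
  set D := (a * b - b * y₀) / a with hD
  have hsub : b * y₀ ≤ a * b := by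
    calc b * y₀ ≤ b * a := Nat.mul_le_mul_left b hy₀
    _ = a * b := Nat.mul_comm b a
  have hdm : a * D + (a * b - b * y₀) % a = a * b - b * y₀ :=
    Nat.div_add_mod (a * b - b * y₀) a
  have hmlt : (a * b - b * y₀) % a < a := Nat.mod_lt _ (by omega)
  have hc : (0 : ℝ) < (a : ℝ) := by exact_mod_cast (by omega : 0 < a)
  have hreal : (((b : ℤ) - (D : ℤ) - (y₀ : ℤ) - 1 : ℤ) : ℝ) <
      (((b + 1 : ℕ) : ℝ) - ((a + 1 : ℕ) : ℝ)) / (((a + 1 : ℕ) : ℝ) - 1) * (y₀ : ℝ) := by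
    push_cast
    rw [div_mul_eq_mul_div, lt_div_iff₀ (by linarith : (0:ℝ) < (a:ℝ) + 1 - 1)]
    have hK : ((a * b - b * y₀ : ℕ) : ℝ) = (a : ℝ) * b - (b : ℝ) * y₀ := by
      rw [Nat.cast_sub hsub]; push_cast; ring
    have hdmR : (a : ℝ) * D + (((a * b - b * y₀) % a : ℕ) : ℝ) =
        ((a * b - b * y₀ : ℕ) : ℝ) := by exact_mod_cast hdm
    have hmltR : (((a * b - b * y₀) % a : ℕ) : ℝ) < (a : ℝ) := by exact_mod_cast hmlt
    nlinarith [hK, hdmR, hmltR]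
  have hz := Int.lt_ceil.mpr hreal
  have hcard : (D : ℤ) + (y₀ : ℤ) ≤ (L.card : ℤ) := by exact_mod_cast hkey
  push_cast
  push_cast at hz
  linarith
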